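/- Under the assumptions above, the new total per-base-station transmit powers satisfy ν''_i · p''_i < ν'_i · p'_i for every i; i.e., increasing the induced load strictly decreases the total transmit power at every base station. -/

import Mathlib

/-- Component `i` of the power interference mapping `P_ν` (on strictly
positive power vectors, where the closed-form expression applies). -/
noncomputable def Pfun (M N : ℕ) (Ni : Fin M → Finset (Fin N))
    (d : Fin N → ℝ) (g : Fin M → Fin N → ℝ) (B K σ2 : ℝ)
    (ν : Fin M → ℝ) (i : Fin M) (p : Fin M → ℝ) : ℝ :=
  (p i / ν i) * ∑ j ∈ Ni i, d j / (K * B *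
    (Real.log (1 + p i * g i j /
      (∑ k ∈ Finset.univ.erase i, ν k * p k * g k j + σ2)) / Real.log 2))

noncomputable def Dfun (M N : ℕ) (g : Fin M → Fin N → ℝ) (σ2 : ℝ)
    (ν p : Fin M → ℝ) (m : Fin M) (j : Fin N) : ℝ :=
  (∑ k ∈ Finset.univ.erase m, ν k * p k * g k j) + σ2

noncomputable def Tf (dj KB x : ℝ) : ℝ := dj / (KB * (Real.log (1 + x) / Real.log 2))

example (M N : ℕ) (Ni : Fin M → Finset (Fin N))
    (d : Fin N → ℝ) (g : Fin M → Fin N → ℝ) (B K σ2 : ℝ)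
    (ν p : Fin M → ℝ) (i : Fin M) :
    Pfun M N Ni d g B K σ2 ν i p =
      (p i / ν i) * ∑ j ∈ Ni i,
        Tf (d j) (K * B) (p i * g i j / Dfun M N g σ2 ν p i j) := rfl


lemma lam_log_lt (lam x : ℝ) (h0 : 0 < lam) (h1 : lam < 1) (hx : 0 < x) :
    lam * Real.log (1 + x) < Real.log (1 + lam * x) := by
  have hc := strictConcaveOn_log_Ioi.2 (Set.mem_Ioi.2 one_pos)
    (Set.mem_Ioi.2 (by linarith : (0:ℝ) < 1 + x))
    (by intro h; nlinarith : (1:ℝ) ≠ 1 + x)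
    (by linarith : (0:ℝ) < 1 - lam) h0 (by ring)
  simp only [smul_eq_mul, Real.log_one, mul_zero, zero_add] at hc
  have h2 : (1 - lam) * 1 + lam * (1 + x) = 1 + lam * x := by ring
  rwa [h2] at hc

lemma lam_log_le (lam x : ℝ) (h0 : 0 < lam) (h1 : lam ≤ 1) (hx : 0 < x) :
    lam * Real.log (1 + x) ≤ Real.log (1 + lam * x) := by
  rcases lt_or_eq_of_le h1 with h | h
  · exact (lam_log_lt lam x h0 h hx).le
  · subst h; simp

lemma fix_sum (M N : ℕ) (Ni : Fin M → Finset (Fin N))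
    (d : Fin N → ℝ) (g : Fin M → Fin N → ℝ) (B K σ2 : ℝ)
    (ν p : Fin M → ℝ) (i : Fin M) (hν : 0 < ν i) (hp : 0 < p i)
    (h : Pfun M N Ni d g B K σ2 ν i p = p i) :
    ∑ j ∈ Ni i, Tf (d j) (K * B) (p i * g i j / Dfun M N g σ2 ν p i j) = ν i := by
  have h' : (p i / ν i) * ∑ j ∈ Ni i,
      Tf (d j) (K * B) (p i * g i j / Dfun M N g σ2 ν p i j) = p i := h
  have hν0 : ν i ≠ 0 := ne_of_gt hν
  have hp0 : p i ≠ 0 := ne_of_gt hp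
  have h2 : (p i / ν i) * ν i = p i := div_mul_cancel₀ (p i) hν0
  exact mul_left_cancel₀ (div_ne_zero hp0 hν0) (h'.trans h2.symm)

lemma Tf_lt (dj KB lam x' x'' : ℝ) (hd : 0 < dj) (hKB : 0 < KB)
    (hlam0 : 0 < lam) (hx' : 0 < x')
    (h : lam * Real.log (1 + x') < Real.log (1 + x'')) :
    Tf dj KB x'' < lam⁻¹ * Tf dj KB x' := by
  have hlog2 : 0 < Real.log 2 := Real.log_pos one_lt_two
  have hL' : 0 < Real.log (1 + x') := Real.log_pos (by linarith)
  have hL'' : 0 < Real.log (1 + x'') := lt_trans (by positivity) h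
  unfold Tf
  have e1 : dj / (KB * (Real.log (1 + x'') / Real.log 2))
      = (dj * Real.log 2) / (KB * Real.log (1 + x'')) := by
    field_simp
  have e2 : lam⁻¹ * (dj / (KB * (Real.log (1 + x') / Real.log 2)))
      = (dj * Real.log 2) / (KB * (lam * Real.log (1 + x'))) := by
    field_simp
  rw [e1, e2]
  apply div_lt_div_of_pos_left (by positivity) (by positivity)
  exact mul_lt_mul_of_pos_left h hKB

theorem total_power_strictly_decreases (M N : ℕ)
    (Ni : Fin M → Finset (Fin N)) (hNi : ∀ i, (Ni i).Nonempty)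
    (d : Fin N → ℝ) (g : Fin M → Fin N → ℝ) (B K σ2 : ℝ)
    (hd : ∀ j, 0 < d j) (hg : ∀ k j, 0 < g k j)
    (hB : 0 < B) (hK : 0 < K) (hσ : 0 < σ2)
    (ν' ν'' p' p'' : Fin M → ℝ)
    (hν' : ∀ i, 0 < ν' i) (hp' : ∀ i, 0 < p' i) (hp'' : ∀ i, 0 < p'' i)
    (hfix' : ∀ i, Pfun M N Ni d g B K σ2 ν' i p' = p' i)
    (hfix'' : ∀ i, Pfun M N Ni d g B K σ2 ν'' i p'' = p'' i)
    (hle : ∀ i, ν' i ≤ ν'' i) (hne : ν'' ≠ ν') :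
    ∀ i, ν'' i * p'' i < ν' i * p' i := by
  have hν'' : ∀ i, 0 < ν'' i := fun i => lt_of_lt_of_le (hν' i) (hle i)
  have hKB : 0 < K * B := mul_pos hK hB
  have hq'pos : ∀ k, 0 < ν' k * p' k := fun k => mul_pos (hν' k) (hp' k)
  have hq''pos : ∀ k, 0 < ν'' k * p'' k := fun k => mul_pos (hν'' k) (hp'' k)
  have hD'pos : ∀ m j, 0 < Dfun M N g σ2 ν' p' m j := by
    intro m j
    have : (0:ℝ) ≤ ∑ k ∈ Finset.univ.erase m, ν' k * p' k * g k j :=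
      Finset.sum_nonneg fun k _ => (mul_pos (mul_pos (hν' k) (hp' k)) (hg k j)).le
    unfold Dfun; linarith
  have hD''pos : ∀ m j, 0 < Dfun M N g σ2 ν'' p'' m j := by
    intro m j
    have : (0:ℝ) ≤ ∑ k ∈ Finset.univ.erase m, ν'' k * p'' k * g k j :=
      Finset.sum_nonneg fun k _ => (mul_pos (mul_pos (hν'' k) (hp'' k)) (hg k j)).le
    unfold Dfun; linarith
  -- the contradiction engine
  have engine : ∀ (m : Fin M) (ρ : ℝ), 1 ≤ ρ →
      (∀ k, ν'' k * p'' k ≤ ρ * (ν' k * p' k)) →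
      ν'' m * p'' m = ρ * (ν' m * p' m) →
      (ν' m < ν'' m ∨ 1 < ρ ∨ ∃ k, k ≠ m ∧ ν'' k * p'' k < ν' k * p' k) →
      False := by
    intro m ρ hρ hqk hqm hstrict
    set lam := ν' m / ν'' m with hlamdef
    have hlam0 : 0 < lam := div_pos (hν' m) (hν'' m)
    have hlam1 : lam ≤ 1 := (div_le_one (hν'' m)).2 (hle m)
    have hρ0 : 0 < ρ := lt_of_lt_of_le one_pos hρ
    -- interference comparison, non-strict (always)
    have hIle : ∀ j, (∑ k ∈ Finset.univ.erase m, ν'' k * p'' k * g k j)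
        ≤ ρ * ∑ k ∈ Finset.univ.erase m, ν' k * p' k * g k j := by
      intro j
      rw [Finset.mul_sum]
      apply Finset.sum_le_sum
      intro k _
      calc ν'' k * p'' k * g k j ≤ (ρ * (ν' k * p' k)) * g k j :=
            mul_le_mul_of_nonneg_right (hqk k) (hg k j).le
        _ = ρ * (ν' k * p' k * g k j) := by ring
    have hDle : ∀ j, Dfun M N g σ2 ν'' p'' m j ≤ ρ * Dfun M N g σ2 ν' p' m j := by
      intro j
      have h1 := hIle j
      unfold Dfun
      nlinarith
    -- p'' m in terms of ρ
    have hp''m : p'' m = ρ * (ν' m * p' m) / ν'' m := by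
      rw [eq_div_iff (ne_of_gt (hν'' m))]
      linarith [hqm, mul_comm (p'' m) (ν'' m)]
    -- comparison of SINRs from comparison of denominators
    have hxle_of : ∀ j, Dfun M N g σ2 ν'' p'' m j ≤ ρ * Dfun M N g σ2 ν' p' m j →
        lam * (p' m * g m j / Dfun M N g σ2 ν' p' m j)
          ≤ p'' m * g m j / Dfun M N g σ2 ν'' p'' m j := by
      intro j hD
      have hD' := hD'pos m j
      have hD'' := hD''pos m j
      have e1 : lam * (p' m * g m j / Dfun M N g σ2 ν' p' m j)
          = (ν' m * p' m * g m j) / (ν'' m * Dfun M N g σ2 ν' p' m j) := by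
        rw [hlamdef]
        field_simp
      have e2 : p'' m * g m j / Dfun M N g σ2 ν'' p'' m j
          = (ρ * (ν' m * p' m) * g m j) / (ν'' m * Dfun M N g σ2 ν'' p'' m j) := by
        rw [hp''m]
        field_simp
      have hνm := hν'' m
      rw [e1, e2, div_le_div_iff₀ (mul_pos hνm hD') (mul_pos hνm hD'')]
      have hgj := hg m j
      have ha := hq'pos m
      nlinarith [mul_pos (mul_pos ha hgj) hνm]
    have hxlt_of : ∀ j, Dfun M N g σ2 ν'' p'' m j < ρ * Dfun M N g σ2 ν' p' m j →
        lam * (p' m * g m j / Dfun M N g σ2 ν' p' m j)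
          < p'' m * g m j / Dfun M N g σ2 ν'' p'' m j := by
      intro j hD
      have hD' := hD'pos m j
      have hD'' := hD''pos m j
      have e1 : lam * (p' m * g m j / Dfun M N g σ2 ν' p' m j)
          = (ν' m * p' m * g m j) / (ν'' m * Dfun M N g σ2 ν' p' m j) := by
        rw [hlamdef]
        field_simp
      have e2 : p'' m * g m j / Dfun M N g σ2 ν'' p'' m j
          = (ρ * (ν' m * p' m) * g m j) / (ν'' m * Dfun M N g σ2 ν'' p'' m j) := by
        rw [hp''m]
        field_simp
      have hνm := hν'' m
      rw [e1, e2, div_lt_div_iff₀ (mul_pos hνm hD') (mul_pos hνm hD'')]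
      have hgj := hg m j
      have ha := hq'pos m
      nlinarith [mul_pos (mul_pos ha hgj) hνm]
    have hx'pos : ∀ j, 0 < p' m * g m j / Dfun M N g σ2 ν' p' m j := by
      intro j
      have := hD'pos m j
      have := hg m j
      have := hp' m
      positivity
    have hx''pos : ∀ j, 0 < p'' m * g m j / Dfun M N g σ2 ν'' p'' m j := by
      intro j
      have := hD''pos m j
      have := hg m j
      have := hp'' m
      positivity
    -- the key pointwise log inequality
    have key : ∀ j ∈ Ni m,
        lam * Real.log (1 + p' m * g m j / Dfun M N g σ2 ν' p' m j)
          < Real.log (1 + p'' m * g m j / Dfun M N g σ2 ν'' p'' m j) := by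
      intro j _
      have hx' := hx'pos j
      have hx'' := hx''pos j
      rcases hstrict with hlt | hρ1 | ⟨k, hkm, hkq⟩
      · -- lam < 1 : strict concavity
        have hlam1' : lam < 1 := (div_lt_one (hν'' m)).2 hlt
        have hxle := hxle_of j (hDle j)
        calc lam * Real.log (1 + p' m * g m j / Dfun M N g σ2 ν' p' m j)
            < Real.log (1 + lam * (p' m * g m j / Dfun M N g σ2 ν' p' m j)) :=
              lam_log_lt _ _ hlam0 hlam1' hx'
          _ ≤ Real.log (1 + p'' m * g m j / Dfun M N g σ2 ν'' p'' m j) := by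
              have h1 : (0:ℝ) < 1 + lam * (p' m * g m j / Dfun M N g σ2 ν' p' m j) := by
                nlinarith [mul_pos hlam0 hx']
              exact Real.log_le_log h1 (by linarith)
      · -- ρ > 1 : noise slack
        have hDlt : Dfun M N g σ2 ν'' p'' m j < ρ * Dfun M N g σ2 ν' p' m j := by
          have h1 := hIle j
          unfold Dfun
          nlinarith
        have hxlt := hxlt_of j hDlt
        calc lam * Real.log (1 + p' m * g m j / Dfun M N g σ2 ν' p' m j)
            ≤ Real.log (1 + lam * (p' m * g m j / Dfun M N g σ2 ν' p' m j)) :=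
              lam_log_le _ _ hlam0 hlam1 hx'
          _ < Real.log (1 + p'' m * g m j / Dfun M N g σ2 ν'' p'' m j) := by
              apply Real.log_lt_log (by nlinarith [mul_pos hlam0 hx'])
              linarith
      · -- strict interference slack at some k ≠ m
        have hDlt : Dfun M N g σ2 ν'' p'' m j < ρ * Dfun M N g σ2 ν' p' m j := by
          have hIlt : (∑ k' ∈ Finset.univ.erase m, ν'' k' * p'' k' * g k' j)
              < ρ * ∑ k' ∈ Finset.univ.erase m, ν' k' * p' k' * g k' j := by
            rw [Finset.mul_sum]
            apply Finset.sum_lt_sum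
            · intro k' _
              calc ν'' k' * p'' k' * g k' j ≤ (ρ * (ν' k' * p' k')) * g k' j :=
                    mul_le_mul_of_nonneg_right (hqk k') (hg k' j).le
                _ = ρ * (ν' k' * p' k' * g k' j) := by ring
            · refine ⟨k, Finset.mem_erase.2 ⟨hkm, Finset.mem_univ k⟩, ?_⟩
              have hgk := hg k j
              have h1 : ν'' k * p'' k * g k j < (ν' k * p' k) * g k j :=
                mul_lt_mul_of_pos_right hkq hgk
              have h2 : (ν' k * p' k) * g k j ≤ ρ * (ν' k * p' k * g k j) := by
                nlinarith [mul_pos (hq'pos k) hgk]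
              linarith
          unfold Dfun
          nlinarith
        have hxlt := hxlt_of j hDlt
        calc lam * Real.log (1 + p' m * g m j / Dfun M N g σ2 ν' p' m j)
            ≤ Real.log (1 + lam * (p' m * g m j / Dfun M N g σ2 ν' p' m j)) :=
              lam_log_le _ _ hlam0 hlam1 hx'
          _ < Real.log (1 + p'' m * g m j / Dfun M N g σ2 ν'' p'' m j) := by
              apply Real.log_lt_log (by nlinarith [mul_pos hlam0 hx'])
              linarith
    -- sum up
    have h1 := fix_sum M N Ni d g B K σ2 ν' p' m (hν' m) (hp' m) (hfix' m)
    have h2 := fix_sum M N Ni d g B K σ2 ν'' p'' m (hν'' m) (hp'' m) (hfix'' m)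
    have hsumlt : ν'' m < ∑ j ∈ Ni m,
        lam⁻¹ * Tf (d j) (K * B) (p' m * g m j / Dfun M N g σ2 ν' p' m j) := by
      rw [← h2]
      apply Finset.sum_lt_sum_of_nonempty (hNi m)
      intro j hj
      exact Tf_lt _ _ _ _ _ (hd j) hKB hlam0 (hx'pos j) (key j hj)
    rw [← Finset.mul_sum, h1] at hsumlt
    have heq : lam⁻¹ * ν' m = ν'' m := by
      rw [hlamdef, inv_div, div_mul_cancel₀ _ (ne_of_gt (hν' m))]
    linarith
  -- main argument
  intro i
  have huniv : (Finset.univ : Finset (Fin M)).Nonempty := ⟨i, Finset.mem_univ i⟩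
  obtain ⟨i0, -, hi0⟩ := Finset.exists_mem_eq_sup' huniv
    (fun k => (ν'' k * p'' k) / (ν' k * p' k))
  set r := Finset.univ.sup' huniv (fun k => (ν'' k * p'' k) / (ν' k * p' k)) with hrdef
  have hqk : ∀ k, ν'' k * p'' k ≤ r * (ν' k * p' k) := by
    intro k
    have h := Finset.le_sup' (f := fun k => (ν'' k * p'' k) / (ν' k * p' k))
      (Finset.mem_univ k)
    rw [← hrdef] at h
    exact (div_le_iff₀ (hq'pos k)).1 h
  have hqm : ν'' i0 * p'' i0 = r * (ν' i0 * p' i0) := by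
    rw [hi0, div_mul_cancel₀ _ (ne_of_gt (hq'pos i0))]
  suffices hr : r < 1 by
    have h := hqk i
    nlinarith [hq'pos i]
  by_contra hr
  push_neg at hr
  rcases lt_or_eq_of_le (hle i0) with hlt | heq
  · exact engine i0 r hr hqk hqm (Or.inl hlt)
  rcases lt_or_eq_of_le hr with hr1 | hr1
  · exact engine i0 r hr hqk hqm (Or.inr (Or.inl hr1))
  -- r = 1
  by_cases hq : ∀ k, ν'' k * p'' k = ν' k * p' k
  · have hex : ∃ i1, ν' i1 ≠ ν'' i1 := by
      by_contra h
      push_neg at h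
      exact hne (funext fun k => (h k).symm)
    obtain ⟨i1, hne1⟩ := hex
    exact engine i1 1 le_rfl (fun k => by rw [one_mul]; exact (hq k).le)
      (by rw [one_mul]; exact hq i1) (Or.inl (lt_of_le_of_ne (hle i1) hne1))
  · push_neg at hq
    obtain ⟨k, hk⟩ := hq
    have hqk1 : ν'' k * p'' k ≤ ν' k * p' k := by
      have := hqk k
      rw [← hr1] at this
      linarith
    have hklt : ν'' k * p'' k < ν' k * p' k := lt_of_le_of_ne hqk1 hk
    have hki0 : k ≠ i0 := by
      intro h
      subst h
      rw [← hr1, one_mul] at hqm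
      exact hk hqm
    exact engine i0 r hr hqk hqm (Or.inr (Or.inr ⟨k, hki0, hklt⟩))
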